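/- arXiv:1109.2645 — 3 statements merged into one kernel-verified Lean document; each statement's English description precedes it below -/
import Mathlib

section
/- Let S ⊆ ℝⁿ be a finite set and let Ξ be the additive subgroup of ℝⁿ generated by S, of rank r. Let γ : Ξ → ℤʳ be a group isomorphism. If μ ∈ Ξ is such that γ(μ) lies in the convex hull (in ℝʳ) of γ(S), then μ lies in the convex hull of S in ℝⁿ. -/
open RealInnerProductSpace

/-- The natural embedding of `ℤʳ` into `ℝʳ`. -/
noncomputable def latticeEmbed {r : ℕ} (k : Fin r → ℤ) : EuclideanSpace ℝ (Fin r) :=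
  WithLp.toLp 2 (fun i => (k i : ℝ))

/-- if `γ(μ)` lies in the convex hull of `γ(S)` in `ℝʳ`, then `μ` lies in the
convex hull of `S` in `ℝⁿ`. -/
theorem stmt_0 (n r : ℕ) (S : Finset (EuclideanSpace ℝ (Fin n)))
    (γ : AddSubgroup.closure (S : Set (EuclideanSpace ℝ (Fin n))) ≃+ (Fin r → ℤ))
    (μ : AddSubgroup.closure (S : Set (EuclideanSpace ℝ (Fin n))))
    (h : latticeEmbed (γ μ) ∈ convexHull ℝ
      (Set.range (fun l : S =>
        latticeEmbed (γ ⟨l.1, AddSubgroup.subset_closure (Finset.mem_coe.mpr l.2)⟩)))) :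
    (μ : EuclideanSpace ℝ (Fin n)) ∈ convexHull ℝ (S : Set (EuclideanSpace ℝ (Fin n))) := by
  classical
  -- the inverse linear map ℝʳ → ℝⁿ
  let v : Fin r → EuclideanSpace ℝ (Fin n) := fun j => ((γ.symm (Pi.single j 1) : EuclideanSpace ℝ (Fin n)))
  let L : EuclideanSpace ℝ (Fin r) →ₗ[ℝ] EuclideanSpace ℝ (Fin n) :=
    ∑ j : Fin r, ((LinearMap.proj j : (Fin r → ℝ) →ₗ[ℝ] ℝ).comp (WithLp.linearEquiv 2 ℝ (Fin r → ℝ)).toLinearMap).smulRight (v j)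
  have hL : ∀ x, L x = ∑ j : Fin r, x j • v j := by
    intro x
    simp [L, LinearMap.sum_apply, LinearMap.proj_apply]
  have key : ∀ a : AddSubgroup.closure (S : Set (EuclideanSpace ℝ (Fin n))), L (latticeEmbed (γ a)) = (a : EuclideanSpace ℝ (Fin n)) := by
    intro a
    have hk : γ a = ∑ j : Fin r, (γ a) j • Pi.single j (1 : ℤ) := by
      conv_lhs => rw [← Finset.univ_sum_single (γ a)]
      refine Finset.sum_congr rfl fun j _ => ?_
      rw [← Pi.single_smul, smul_eq_mul, mul_one]
    have : a = ∑ j : Fin r, (γ a) j • γ.symm (Pi.single j (1 : ℤ)) := by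
      conv_lhs => rw [← γ.symm_apply_apply a, hk]
      rw [map_sum]
      exact Finset.sum_congr rfl fun j _ => map_zsmul γ.symm _ _
    calc L (latticeEmbed (γ a)) = ∑ j : Fin r, ((γ a) j : ℝ) • v j := by
          rw [hL]; simp [latticeEmbed]
      _ = ∑ j : Fin r, (((γ a) j • γ.symm (Pi.single j (1 : ℤ)) : EuclideanSpace ℝ (Fin n))) := by
          refine Finset.sum_congr rfl fun j _ => ?_
          rw [Int.cast_smul_eq_zsmul]
      _ = (a : EuclideanSpace ℝ (Fin n)) := by
          conv_rhs => rw [this]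
          rw [AddSubmonoidClass.coe_finset_sum]
          exact Finset.sum_congr rfl fun j _ => (AddSubgroupClass.coe_zsmul _ _).symm
  have himg := Set.mem_image_of_mem L h
  rw [L.image_convexHull] at himg
  rw [← key μ]
  refine convexHull_mono ?_ himg
  rintro x ⟨y, ⟨l, rfl⟩, rfl⟩
  rw [key]
  exact l.2
end

section
/- Let S ⊆ ℝⁿ be a finite set generating a free abelian group Ξ of rank r, and let γ : Ξ → ℤʳ be a group isomorphism. If λ* ∈ S is a vertex (extreme point) of the convex hull of S in ℝⁿ, then γ(λ*) is a vertex of the convex hull of γ(S) in ℝʳ. -/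
open RealInnerProductSpace

/-- An extreme point of the convex hull of `A` is not in the convex hull of `A` minus itself. -/
lemma aux_not_mem_hull {V : Type*} [AddCommGroup V] [Module ℝ V] {A : Set V} {x : V}
    (h : x ∈ Set.extremePoints ℝ (convexHull ℝ A)) : x ∉ convexHull ℝ (A \ {x}) := by
  rw [(convex_convexHull ℝ A).mem_extremePoints_iff_mem_diff_convexHull_diff] at h
  intro hx
  exact h.2 (convexHull_mono (Set.diff_subset_diff_left (subset_convexHull ℝ A)) hx)

/-- Conversely, a point of `A` not in the convex hull of `A` minus itself is an extreme point
of the convex hull of `A`. -/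
lemma aux_mem_extremePoints {V : Type*} [AddCommGroup V] [Module ℝ V] [NoZeroSMulDivisors ℝ V]
    {A : Set V} {x : V} (hxA : x ∈ A) (h : x ∉ convexHull ℝ (A \ {x})) :
    x ∈ Set.extremePoints ℝ (convexHull ℝ A) := by
  rw [mem_extremePoints_iff_forall_segment]
  refine ⟨subset_convexHull ℝ A hxA, ?_⟩
  intro x₁ h₁ x₂ h₂ hseg
  by_cases hA : (A \ {x}).Nonempty
  · have hins : A = insert x (A \ {x}) := by
      rw [Set.insert_diff_singleton, Set.insert_eq_of_mem hxA]
    have hKconv : Convex ℝ (convexHull ℝ (A \ {x})) := convex_convexHull ℝ _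
    rw [hins, convexHull_insert hA, mem_convexJoin] at h₁ h₂
    obtain ⟨x', hx', p, hp, hx₁⟩ := h₁
    obtain ⟨x'', hx'', q, hq, hx₂⟩ := h₂
    rw [Set.mem_singleton_iff] at hx' hx''
    rw [hx'] at hx₁
    rw [hx''] at hx₂
    obtain ⟨a₁, b₁, ha₁, hb₁, hab₁, hx₁⟩ := hx₁
    obtain ⟨a₂, b₂, ha₂, hb₂, hab₂, hx₂⟩ := hx₂
    obtain ⟨t, s, ht, hs, hts, hx⟩ := hseg
    have hc : 0 ≤ t * b₁ := mul_nonneg ht hb₁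
    have hd : 0 ≤ s * b₂ := mul_nonneg hs hb₂
    have hcoef : (t * a₁ + s * a₂) + (t * b₁ + s * b₂) = 1 := by
      have : (t * a₁ + s * a₂) + (t * b₁ + s * b₂) = t * (a₁ + b₁) + s * (a₂ + b₂) := by ring
      rw [this, hab₁, hab₂, mul_one, mul_one, hts]
    have key : (t * b₁ + s * b₂) • x = (t * b₁) • p + (s * b₂) • q := by
      have h1 : t • (a₁ • x + b₁ • p) + s • (a₂ • x + b₂ • q) = x := by
        rw [hx₁, hx₂, hx]
      have h2 : (t * a₁ + s * a₂) • x + ((t * b₁) • p + (s * b₂) • q) = x := by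
        conv_rhs => rw [← h1]
        module
      have h4 : (t * b₁ + s * b₂) • x + (t * a₁ + s * a₂) • x = x := by
        rw [← add_smul, show (t * b₁ + s * b₂) + (t * a₁ + s * a₂) = 1 by linarith, one_smul]
      calc (t * b₁ + s * b₂) • x = x - (t * a₁ + s * a₂) • x := by
            rw [eq_sub_iff_add_eq]; exact h4
        _ = ((t * a₁ + s * a₂) • x + ((t * b₁) • p + (s * b₂) • q))
            - (t * a₁ + s * a₂) • x := by rw [h2]
        _ = (t * b₁) • p + (s * b₂) • q := by abel
    by_cases h0 : t * b₁ + s * b₂ = 0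
    · obtain ⟨hc0, hd0⟩ := (add_eq_zero_iff_of_nonneg hc hd).mp h0
      rcases mul_eq_zero.mp hc0 with ht0 | hb10
      · right
        have hs1 : s = 1 := by linarith
        rw [← hx, ht0, hs1, zero_smul, one_smul, zero_add]
      · left
        have ha11 : a₁ = 1 := by linarith
        rw [← hx₁, hb10, ha11, zero_smul, one_smul, add_zero]
    · exfalso
      have hpos : 0 < t * b₁ + s * b₂ := lt_of_le_of_ne (by positivity) (Ne.symm h0)
      have hxeq : x = ((t * b₁ + s * b₂)⁻¹ * (t * b₁)) • p
          + ((t * b₁ + s * b₂)⁻¹ * (s * b₂)) • q := by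
        have := congrArg (fun v => (t * b₁ + s * b₂)⁻¹ • v) key
        simpa [smul_smul, smul_add, inv_smul_smul₀ hpos.ne'] using this
      have hxK : x ∈ convexHull ℝ (A \ {x}) := by
        have hmemK := hKconv hp hq (a := (t * b₁ + s * b₂)⁻¹ * (t * b₁))
          (b := (t * b₁ + s * b₂)⁻¹ * (s * b₂)) (by positivity) (by positivity)
          (by rw [← mul_add, inv_mul_cancel₀ hpos.ne'])
        rw [← hxeq] at hmemK
        exact hmemK
      exact h hxK
  · left
    rw [Set.not_nonempty_iff_eq_empty, Set.diff_eq_empty] at hA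
    have hAx : A = {x} := Set.Subset.antisymm hA (Set.singleton_subset_iff.mpr hxA)
    rw [hAx, convexHull_singleton, Set.mem_singleton_iff] at h₁
    exact h₁

/-- A `ℚ`-linear retraction of `ℝ` onto `ℚ`. -/
lemma aux_exists_rat_retraction : ∃ π : ℝ →ₗ[ℚ] ℚ, ∀ q : ℚ, π (q : ℝ) = q := by
  obtain ⟨g, hg⟩ := LinearMap.exists_leftInverse_of_injective (Algebra.linearMap ℚ ℝ)
    (by rw [LinearMap.ker_eq_bot]; intro a b h; simpa using h)
  refine ⟨g, fun q => ?_⟩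
  have := LinearMap.congr_fun hg q
  simpa using this

/-- if `λ* ∈ S` is a vertex (extreme point) of `conv S`, then `γ(λ*)` is a
vertex of `conv (γ S)`. -/
theorem stmt_1 (n r : ℕ) (S : Finset (EuclideanSpace ℝ (Fin n)))
    (γ : AddSubgroup.closure (S : Set (EuclideanSpace ℝ (Fin n))) ≃+ (Fin r → ℤ))
    (lstar : EuclideanSpace ℝ (Fin n)) (hmem : lstar ∈ S)
    (hvert : lstar ∈ Set.extremePoints ℝ (convexHull ℝ (S : Set (EuclideanSpace ℝ (Fin n))))) :
    latticeEmbed (γ ⟨lstar, AddSubgroup.subset_closure (Finset.mem_coe.mpr hmem)⟩) ∈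
      Set.extremePoints ℝ (convexHull ℝ
        (Set.range (fun l : S =>
          latticeEmbed (γ ⟨l.1, AddSubgroup.subset_closure (Finset.mem_coe.mpr l.2)⟩)))) := by
  classical
  set e : {x // x ∈ S} → EuclideanSpace ℝ (Fin r) :=
    fun l => latticeEmbed (γ ⟨l.1, AddSubgroup.subset_closure (Finset.mem_coe.mpr l.2)⟩)
    with he
  set kstar : Fin r → ℤ := γ ⟨lstar, AddSubgroup.subset_closure (Finset.mem_coe.mpr hmem)⟩
    with hkstar
  set y : EuclideanSpace ℝ (Fin r) := latticeEmbed kstar with hy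
  have hA : lstar ∉ convexHull ℝ ((S : Set (EuclideanSpace ℝ (Fin n))) \ {lstar}) :=
    aux_not_mem_hull hvert
  apply aux_mem_extremePoints (A := Set.range e) (x := y) ⟨⟨lstar, hmem⟩, rfl⟩
  intro hcon
  obtain ⟨ι, hfin, z, w, hzs, hai, hw0, hw1, hwy⟩ := eq_pos_convex_span_of_mem_convexHull hcon
  letI : Fintype ι := hfin
  -- choose preimages in S
  have hpre : ∀ i, ∃ l : {x // x ∈ S}, e l = z i ∧ (l : EuclideanSpace ℝ (Fin n)) ≠ lstar := by
    intro i
    have hz := hzs (Set.mem_range_self i)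
    obtain ⟨l, hl⟩ := hz.1
    refine ⟨l, hl, fun hll => hz.2 ?_⟩
    have : l = ⟨lstar, hmem⟩ := Subtype.ext hll
    rw [← hl, this]
    rfl
  choose l hl hlne using hpre
  set v : ι → Fin r → ℤ :=
    fun i => γ ⟨(l i).1, AddSubgroup.subset_closure (Finset.mem_coe.mpr (l i).2)⟩ with hv
  have hzv : ∀ i, z i = latticeEmbed (v i) := fun i => (hl i).symm
  -- coordinate form of the real convex combination
  have hreal : ∀ j, ∑ i, w i * ((v i j : ℤ) : ℝ) = ((kstar j : ℤ) : ℝ) := by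
    intro j
    have h1 : (∑ i, w i • z i) j = y j := congrArg (fun f => f j) hwy
    have h2 : (∑ i, w i • z i) j = ∑ i, w i * ((v i j : ℤ) : ℝ) := by
      rw [WithLp.ofLp_sum, Finset.sum_apply]
      refine Finset.sum_congr rfl fun i _ => ?_
      rw [hzv i]
      rfl
    rw [← h2, h1]
    simp [hy, latticeEmbed]
  -- rational retraction
  obtain ⟨π, hπ⟩ := aux_exists_rat_retraction
  set wq : ι → ℚ := fun i => π (w i) with hwq
  have hπ1 : π (1 : ℝ) = 1 := by simpa using hπ 1
  have hsumq : ∑ i, wq i = 1 := by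
    have := congrArg π hw1
    rw [map_sum] at this
    rw [hwq]
    simpa [hπ1] using this
  have hsumr : ∑ i, ((wq i : ℚ) : ℝ) = 1 := by
    rw [← Rat.cast_sum, hsumq, Rat.cast_one]
  -- rational coordinate equation
  have hq : ∀ j, ∑ i, wq i * ((v i j : ℤ) : ℚ) = ((kstar j : ℤ) : ℚ) := by
    intro j
    have h1 := congrArg π (hreal j)
    rw [map_sum] at h1
    have h2 : ∀ i, π (w i * ((v i j : ℤ) : ℝ)) = wq i * ((v i j : ℤ) : ℚ) := by
      intro i
      have : w i * ((v i j : ℤ) : ℝ) = ((v i j : ℤ) : ℚ) • w i := by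
        rw [Rat.smul_def]; push_cast; ring
      rw [this, map_smul, smul_eq_mul, mul_comm]
    have h3 : π ((kstar j : ℝ)) = ((kstar j : ℤ) : ℚ) := by
      have : ((kstar j : ℤ) : ℝ) = (((kstar j : ℤ) : ℚ) : ℝ) := by push_cast; ring
      rw [this, hπ]
    rw [Finset.sum_congr rfl (fun i _ => h2 i)] at h1
    rw [h1, h3]
  -- the rational weights also give a convex combination equal to y
  have hwyq : ∑ i, ((wq i : ℚ) : ℝ) • z i = y := by
    ext j
    rw [WithLp.ofLp_sum, Finset.sum_apply]
    have h2 : ∀ i, (((wq i : ℚ) : ℝ) • z i) j = ((wq i * ((v i j : ℤ) : ℚ) : ℚ) : ℝ) := by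
      intro i
      rw [hzv i]
      push_cast
      rfl
    rw [Finset.sum_congr rfl (fun i _ => h2 i), ← Rat.cast_sum, hq j]
    push_cast
    simp [hy, latticeEmbed]
  -- uniqueness of barycentric coordinates
  have huniq : w = fun i => ((wq i : ℚ) : ℝ) := by
    refine (affineIndependent_iff_eq_of_fintype_affineCombination_eq ℝ z).mp hai w
      (fun i => ((wq i : ℚ) : ℝ)) hw1 hsumr ?_
    rw [Finset.univ.affineCombination_eq_linear_combination z w hw1,
      Finset.univ.affineCombination_eq_linear_combination z _ hsumr, hwy, hwyq]
  have hwq0 : ∀ i, 0 ≤ wq i := by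
    intro i
    have := (hw0 i).le
    rw [huniq] at this
    have h' : (0 : ℝ) ≤ ((wq i : ℚ) : ℝ) := by simpa using this
    exact_mod_cast h'
  -- clear denominators
  set N : ℕ := ∏ i, (wq i).den with hN
  have hNpos : 0 < N := Finset.prod_pos fun i _ => (wq i).pos
  set c : ι → ℤ := fun i => (wq i).num * ((N / (wq i).den : ℕ) : ℤ) with hc
  have hkey : ∀ i, (c i : ℚ) = wq i * N := by
    intro i
    have hdvd : (wq i).den ∣ N := Finset.dvd_prod_of_mem _ (Finset.mem_univ i)
    have h1 : ((N / (wq i).den) * (wq i).den : ℕ) = N := Nat.div_mul_cancel hdvd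
    have h2 : (wq i) * ((wq i).den : ℚ) = (wq i).num := Rat.mul_den_eq_num _
    have h3 : (((N / (wq i).den : ℕ)) : ℚ) * ((wq i).den : ℚ) = (N : ℚ) := by
      exact_mod_cast congrArg (Nat.cast : ℕ → ℚ) h1
    rw [hc]
    push_cast
    calc ((wq i).num : ℚ) * ((N / (wq i).den : ℕ) : ℚ)
        = (wq i) * ((wq i).den : ℚ) * ((N / (wq i).den : ℕ) : ℚ) := by rw [h2]
      _ = (wq i) * (((N / (wq i).den : ℕ) : ℚ) * ((wq i).den : ℚ)) := by ring
      _ = wq i * N := by rw [h3]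
  -- the integral equation
  have hZ : ∀ j, ∑ i, c i * v i j = (N : ℤ) * kstar j := by
    intro j
    have : ((∑ i, c i * v i j : ℤ) : ℚ) = (((N : ℤ) * kstar j : ℤ) : ℚ) := by
      push_cast
      calc ∑ i, (c i : ℚ) * ((v i j : ℤ) : ℚ)
          = ∑ i, (N : ℚ) * (wq i * ((v i j : ℤ) : ℚ)) := by
            refine Finset.sum_congr rfl fun i _ => ?_
            rw [hkey i]; ring
        _ = (N : ℚ) * ∑ i, wq i * ((v i j : ℤ) : ℚ) := by rw [Finset.mul_sum]
        _ = (N : ℚ) * ((kstar j : ℤ) : ℚ) := by rw [hq j]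
    exact_mod_cast this
  have hZr : ∑ i, c i • v i = (N : ℤ) • kstar := by
    funext j
    rw [Finset.sum_apply]
    simpa [smul_eq_mul] using hZ j
  -- pull back through γ
  set σ : ι → AddSubgroup.closure (S : Set (EuclideanSpace ℝ (Fin n))) :=
    fun i => ⟨(l i).1, AddSubgroup.subset_closure (Finset.mem_coe.mpr (l i).2)⟩ with hσ
  have hγeq : γ (∑ i, c i • σ i) = γ ((N : ℤ) • (⟨lstar,
      AddSubgroup.subset_closure (Finset.mem_coe.mpr hmem)⟩ :
      AddSubgroup.closure (S : Set (EuclideanSpace ℝ (Fin n))))) := by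
    rw [map_sum, map_zsmul]
    have : ∀ i, γ (c i • σ i) = c i • v i := fun i => by rw [map_zsmul]
    rw [Finset.sum_congr rfl fun i _ => this i, hZr]
  have h5 := γ.injective hγeq
  have hE : ∑ i, c i • ((l i : EuclideanSpace ℝ (Fin n))) = (N : ℤ) • lstar := by
    have := congrArg (AddSubgroup.closure (S : Set (EuclideanSpace ℝ (Fin n)))).subtype h5
    rw [map_sum] at this
    simp only [map_zsmul, AddSubgroup.coe_subtype] at this
    exact this
  -- back to real convex combination for lstar
  have hfinal : ∑ i, ((wq i : ℚ) : ℝ) • ((l i : EuclideanSpace ℝ (Fin n))) = lstar := by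
    have hNne : ((N : ℝ)) ≠ 0 := Nat.cast_ne_zero.mpr hNpos.ne'
    apply smul_right_injective (EuclideanSpace ℝ (Fin n)) hNne
    have h6 : ∀ i, (c i : ℝ) • ((l i : EuclideanSpace ℝ (Fin n)))
        = (N : ℝ) • (((wq i : ℚ) : ℝ) • ((l i : EuclideanSpace ℝ (Fin n)))) := by
      intro i
      rw [smul_smul]
      congr 1
      have : ((c i : ℚ) : ℝ) = ((wq i * N : ℚ) : ℝ) := by exact_mod_cast hkey i
      push_cast at this
      rw [this]; ring
    calc (N : ℝ) • ∑ i, ((wq i : ℚ) : ℝ) • ((l i : EuclideanSpace ℝ (Fin n)))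
        = ∑ i, (N : ℝ) • (((wq i : ℚ) : ℝ) • ((l i : EuclideanSpace ℝ (Fin n)))) := by
          rw [Finset.smul_sum]
      _ = ∑ i, (c i : ℝ) • ((l i : EuclideanSpace ℝ (Fin n))) := by
          exact Finset.sum_congr rfl fun i _ => (h6 i).symm
      _ = ∑ i, c i • ((l i : EuclideanSpace ℝ (Fin n))) := by
          refine Finset.sum_congr rfl fun i _ => ?_
          rw [Int.cast_smul_eq_zsmul]
      _ = (N : ℤ) • lstar := hE
      _ = (N : ℝ) • lstar := by rw [← Int.cast_smul_eq_zsmul ℝ]; norm_num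
  -- contradiction with extremality of lstar
  apply hA
  have hmemS : ∀ i, ((l i : EuclideanSpace ℝ (Fin n)))
      ∈ (S : Set (EuclideanSpace ℝ (Fin n))) \ {lstar} :=
    fun i => ⟨(l i).2, hlne i⟩
  have := Finset.centerMass_mem_convexHull (Finset.univ : Finset ι)
    (w := fun i => ((wq i : ℚ) : ℝ))
    (fun i _ => by show (0:ℝ) ≤ ((wq i : ℚ) : ℝ); exact_mod_cast hwq0 i)
    (by rw [hsumr]; norm_num) (z := fun i => (l i : EuclideanSpace ℝ (Fin n)))
    (fun i _ => hmemS i)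
  rwa [Finset.centerMass_eq_of_sum_1 _ _ hsumr, hfinal] at this
end

section
/- With the notation of the associated Laurent polynomial: let f be an exponential sum on ℂⁿ with spectrum S generating a free group Ξ of rank r with basis ω₁,…,ω_r, P the associated Laurent polynomial, L(x) = (⟨x,ω₁⟩,…,⟨x,ω_r⟩), and define F_f = { x ∈ ℝⁿ : ∃ χ ∈ Hom(Ξ, S¹), f_χ(x) = 0 }. Then L(F_f) = L(ℝⁿ) ∩ A_P and L(ℝⁿ \ F_f) = L(ℝⁿ) \ A_P, where A_P = Log(V(P)) is the amoeba of P and Log(ζ) = (ln|ζ₁|,…,ln|ζ_r|). -/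
/-- An additive character maps finite sums to finite products. -/
lemma addChar_map_sum {A M ι : Type*} [AddCommMonoid A] [CommMonoid M]
    (ψ : AddChar A M) (s : Finset ι) (f : ι → A) :
    ψ (∑ i ∈ s, f i) = ∏ i ∈ s, ψ (f i) := by
  classical
  induction s using Finset.induction with
  | empty => simp
  | insert _ _ h ih => rw [Finset.sum_insert h, Finset.prod_insert h, AddChar.map_add_eq_mul, ih]

/-- Coercion of an integer power from the circle to `ℂ`. -/
lemma circle_coe_zpow (z : Circle) (k : ℤ) : ((z ^ k : Circle) : ℂ) = (z : ℂ) ^ k :=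
  map_zpow' Circle.coeHom Circle.coe_inv z k

/-- Given `ℤ`-linearly independent `ω j` belonging to a subgroup `Ξ` contained in their
`ℤ`-span, and arbitrary circle values `u j`, there is an additive character of `Ξ` sending
`ω j` to `u j`. -/
lemma exists_char {E : Type*} [AddCommGroup E] {r : ℕ}
    (Ξ : AddSubgroup E) (ω : Fin r → E) (hind : LinearIndependent ℤ ω)
    (hω : ∀ j, ω j ∈ Ξ) (hΞ : ∀ v ∈ Ξ, v ∈ Submodule.span ℤ (Set.range ω))
    (u : Fin r → Circle) :
    ∃ χ : AddChar Ξ Circle, ∀ j (h : ω j ∈ Ξ), χ ⟨ω j, h⟩ = u j := by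
  classical
  set B : Module.Basis (Fin r) ℤ (Submodule.span ℤ (Set.range ω)) := Module.Basis.span hind with hB
  refine ⟨{
    toFun := fun v => ∏ j, u j ^ (B.repr ⟨v.1, hΞ v.1 v.2⟩ j)
    map_zero_eq_one' := ?_
    map_add_eq_mul' := ?_ }, ?_⟩
  · have h0 : (⟨((0 : Ξ) : E), hΞ _ (0 : Ξ).2⟩ : Submodule.span ℤ (Set.range ω)) = 0 :=
      Subtype.ext rfl
    show (∏ j, u j ^ (B.repr ⟨((0 : Ξ) : E), hΞ _ (0 : Ξ).2⟩ j)) = 1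
    rw [h0]
    simp
  · intro v w
    have hadd : (⟨((v + w : Ξ) : E), hΞ _ (v + w).2⟩ : Submodule.span ℤ (Set.range ω))
        = ⟨(v : E), hΞ _ v.2⟩ + ⟨(w : E), hΞ _ w.2⟩ := Subtype.ext rfl
    simp only [hadd, map_add, Finsupp.coe_add, Pi.add_apply, zpow_add]
    exact Finset.prod_mul_distrib
  · intro j h
    have hj : (⟨ω j, hΞ _ h⟩ : Submodule.span ℤ (Set.range ω)) = B j :=
      (Module.Basis.span_apply hind j).symm
    have : ∀ j', u j' ^ ((B.repr (B j)) j') = if j' = j then u j else 1 := by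
      intro j'
      rcases eq_or_ne j' j with hjj | hjj
      · subst hjj; simp [Module.Basis.repr_self, Finsupp.single_apply]
      · simp [Module.Basis.repr_self, Finsupp.single_apply, (Ne.symm hjj), hjj]
    show (∏ j', u j' ^ (B.repr ⟨ω j, hΞ _ h⟩ j')) = u j
    rw [hj]
    simp only [this]
    simp

/-- `L(F_f) = L(ℝⁿ) ∩ A_P` and `L(ℝⁿ \ F_f) = L(ℝⁿ) \ A_P`, where
`F_f = {x : ∃ χ, f_χ(x) = 0}` and `A_P = Log V(P)` is the amoeba of the associated Laurent
polynomial `P`. -/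
theorem stmt_12 (n r : ℕ) (S : Finset (EuclideanSpace ℝ (Fin n)))
    (a : EuclideanSpace ℝ (Fin n) → ℂ) (ha : ∀ l ∈ S, a l ≠ 0)
    (ω : Fin r → EuclideanSpace ℝ (Fin n)) (hind : LinearIndependent ℤ ω)
    (hωmem : ∀ j, ω j ∈ AddSubgroup.closure (S : Set (EuclideanSpace ℝ (Fin n))))
    (g : EuclideanSpace ℝ (Fin n) → Fin r → ℤ)
    (hg : ∀ l ∈ S, l = ∑ j, g l j • ω j)
    (P : (Fin r → ℂ) → ℂ)
    (hP : ∀ ζ, P ζ = ∑ l ∈ S, a l * ∏ j, ζ j ^ (g l j))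
    (L : EuclideanSpace ℝ (Fin n) →ₗ[ℝ] EuclideanSpace ℝ (Fin r))
    (hL : ∀ (x : EuclideanSpace ℝ (Fin n)) (i : Fin r), L x i = (inner ℝ x (ω i) : ℝ))
    (Ff : Set (EuclideanSpace ℝ (Fin n)))
    (hFf : Ff = {x | ∃ χ : AddChar (AddSubgroup.closure (S : Set (EuclideanSpace ℝ (Fin n)))) Circle,
      ∑ l ∈ S.attach,
        a l.1 * (χ ⟨l.1, AddSubgroup.subset_closure (Finset.mem_coe.mpr l.2)⟩ : ℂ) *
          Complex.exp ((inner ℝ x l.1 : ℝ) : ℂ) = 0})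
    (AP : Set (EuclideanSpace ℝ (Fin r)))
    (hAP : AP = {y | ∃ ζ : Fin r → ℂ, (∀ j, ζ j ≠ 0) ∧ P ζ = 0 ∧
      ∀ j, y j = Real.log (‖ζ j‖)}) :
    L '' Ff = Set.range L ∩ AP ∧ L '' Ffᶜ = Set.range L \ AP := by
  classical
  set Ξ : AddSubgroup (EuclideanSpace ℝ (Fin n)) :=
    AddSubgroup.closure (S : Set (EuclideanSpace ℝ (Fin n))) with hΞdef
  -- Ξ is contained in the ℤ-span of the ω's
  have hSM : ∀ l ∈ S, l ∈ Submodule.span ℤ (Set.range ω) := by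
    intro l hl
    rw [hg l hl]
    exact Submodule.sum_mem _ fun j _ =>
      Submodule.smul_mem _ _ (Submodule.subset_span ⟨j, rfl⟩)
  have hΞM : ∀ v ∈ Ξ, v ∈ Submodule.span ℤ (Set.range ω) := by
    intro v hv
    exact (AddSubgroup.closure_le ((Submodule.span ℤ (Set.range ω)).toAddSubgroup)).mpr
      (fun l hl => hSM l hl) hv
  -- the value of any character on a frequency `l ∈ S`
  have hχl : ∀ (χ : AddChar Ξ Circle) (l : EuclideanSpace ℝ (Fin n)) (hl : l ∈ S)
      (hlΞ : l ∈ Ξ),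
      χ ⟨l, hlΞ⟩ = ∏ j, χ ⟨ω j, hωmem j⟩ ^ (g l j) := by
    intro χ l hl hlΞ
    have h1 : (⟨l, hlΞ⟩ : Ξ) = ∑ j, g l j • (⟨ω j, hωmem j⟩ : Ξ) := by
      apply Subtype.ext
      rw [AddSubgroup.val_finset_sum]
      simpa using hg l hl
    rw [h1, addChar_map_sum]
    exact Finset.prod_congr rfl fun j _ => AddChar.map_zsmul_eq_zpow χ _ _
  -- inner product expansion
  have hinner : ∀ (x : EuclideanSpace ℝ (Fin n)) (l : EuclideanSpace ℝ (Fin n)), l ∈ S →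
      (inner ℝ x l : ℝ) = ∑ j, (g l j : ℝ) * (L x j) := by
    intro x l hl
    conv_lhs => rw [hg l hl]
    rw [inner_sum]
    refine Finset.sum_congr rfl fun j _ => ?_
    rw [← Int.cast_smul_eq_zsmul ℝ, real_inner_smul_right, hL]
  -- the key computation: f_χ(x) = P(ζ) with ζ j = χ(ω j) e^{(Lx)_j}
  have key : ∀ (χ : AddChar Ξ Circle) (x : EuclideanSpace ℝ (Fin n)),
      (∑ l ∈ S.attach,
        a l.1 * (χ ⟨l.1, AddSubgroup.subset_closure (Finset.mem_coe.mpr l.2)⟩ : ℂ) *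
          Complex.exp ((inner ℝ x l.1 : ℝ) : ℂ))
      = P (fun j => (χ ⟨ω j, hωmem j⟩ : ℂ) * Complex.exp ((L x j : ℝ) : ℂ)) := by
    intro χ x
    rw [hP, ← Finset.sum_attach S (fun l => a l * ∏ j,
      ((χ ⟨ω j, hωmem j⟩ : ℂ) * Complex.exp ((L x j : ℝ) : ℂ)) ^ (g l j))]
    refine Finset.sum_congr rfl fun l _ => ?_
    have hprod : (∏ j, ((χ ⟨ω j, hωmem j⟩ : ℂ) * Complex.exp ((L x j : ℝ) : ℂ)) ^ (g l.1 j))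
        = (∏ j, (χ ⟨ω j, hωmem j⟩ : ℂ) ^ (g l.1 j)) *
            Complex.exp ((inner ℝ x l.1 : ℝ) : ℂ) := by
      have h2 : (∏ j, (Complex.exp ((L x j : ℝ) : ℂ)) ^ (g l.1 j))
          = Complex.exp ((inner ℝ x l.1 : ℝ) : ℂ) := by
        have : ∀ j, (Complex.exp ((L x j : ℝ) : ℂ)) ^ (g l.1 j)
            = Complex.exp ((g l.1 j : ℂ) * ((L x j : ℝ) : ℂ)) := fun j =>
          (Complex.exp_int_mul _ _).symm
        simp only [this, ← Complex.exp_sum]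
        congr 1
        rw [hinner x l.1 l.2]
        push_cast
        ring
      rw [← h2, ← Finset.prod_mul_distrib]
      exact Finset.prod_congr rfl fun j _ => mul_zpow _ _ _
    have hcoe : (∏ j, (χ ⟨ω j, hωmem j⟩ : ℂ) ^ (g l.1 j))
        = ((χ ⟨l.1, AddSubgroup.subset_closure (Finset.mem_coe.mpr l.2)⟩ : Circle) : ℂ) := by
      rw [hχl χ l.1 l.2 (AddSubgroup.subset_closure (Finset.mem_coe.mpr l.2))]
      rw [show ((∏ j, χ ⟨ω j, hωmem j⟩ ^ (g l.1 j) : Circle) : ℂ)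
          = ∏ j, ((χ ⟨ω j, hωmem j⟩ ^ (g l.1 j) : Circle) : ℂ) from
        map_prod Circle.coeHom _ _]
      exact Finset.prod_congr rfl fun j _ => (circle_coe_zpow _ _).symm
    rw [hprod, hcoe]
    ring
  -- forward direction: x ∈ Ff → L x ∈ AP
  have fwd : ∀ x, x ∈ Ff → L x ∈ AP := by
    intro x hx
    rw [hFf] at hx
    obtain ⟨χ, hχ⟩ := hx
    rw [hAP]
    refine ⟨fun j => (χ ⟨ω j, hωmem j⟩ : ℂ) * Complex.exp ((L x j : ℝ) : ℂ),
      fun j => mul_ne_zero (Circle.coe_ne_zero _) (Complex.exp_ne_zero _), ?_, ?_⟩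
    · rw [← key χ x]; exact hχ
    · intro j
      simp [map_mul, Complex.norm_exp, Real.log_exp, Circle.norm_coe]
  -- backward direction: L x ∈ AP → x ∈ Ff
  have bwd : ∀ x, L x ∈ AP → x ∈ Ff := by
    intro x hx
    rw [hAP] at hx
    obtain ⟨ζ, hζ0, hζP, hζlog⟩ := hx
    have habspos : ∀ j, (0 : ℝ) < ‖ζ j‖ := fun j =>
      norm_pos_iff.mpr (hζ0 j)
    have habs : ∀ j, ‖ζ j‖ = Real.exp (L x j) := fun j => by
      rw [hζlog j, Real.exp_log (habspos j)]
    have hu1 : ∀ j, ‖ζ j / ((‖ζ j‖ : ℝ) : ℂ)‖ = 1 := by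
      intro j
      rw [norm_div, Complex.norm_real, norm_norm,
        div_self (ne_of_gt (habspos j))]
    set u : Fin r → Circle := fun j =>
      ⟨ζ j / ((‖ζ j‖ : ℝ) : ℂ), by
        simp [Submonoid.unitSphere, hu1 j, div_self (ne_of_gt (habspos j))]⟩ with hu
    obtain ⟨χ, hχω⟩ := exists_char Ξ ω hind hωmem hΞM u
    have hζeq : ∀ j, (u j : ℂ) * Complex.exp ((L x j : ℝ) : ℂ) = ζ j := by
      intro j
      have : Complex.exp ((L x j : ℝ) : ℂ) = ((‖ζ j‖ : ℝ) : ℂ) := by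
        rw [habs j, Complex.ofReal_exp]
      rw [this, hu]
      exact div_mul_cancel₀ _ (by
        simpa using ne_of_gt (habspos j))
    rw [hFf]
    refine ⟨χ, ?_⟩
    rw [key χ x]
    have : (fun j => (χ ⟨ω j, hωmem j⟩ : ℂ) * Complex.exp ((L x j : ℝ) : ℂ)) = ζ := by
      funext j
      rw [hχω j (hωmem j)]
      exact hζeq j
    rw [this]
    exact hζP
  -- assemble the two set equalities
  constructor
  · ext y
    constructor
    · rintro ⟨x, hx, rfl⟩
      exact ⟨⟨x, rfl⟩, fwd x hx⟩
    · rintro ⟨⟨x, rfl⟩, hy⟩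
      exact ⟨x, bwd x hy, rfl⟩
  · ext y
    constructor
    · rintro ⟨x, hx, rfl⟩
      exact ⟨⟨x, rfl⟩, fun hy => hx (bwd x hy)⟩
    · rintro ⟨⟨x, rfl⟩, hy⟩
      exact ⟨x, fun hx => hy (fwd x hx), rfl⟩
end
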